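/- arXiv:1912.09508 — 2 statements merged into one kernel-verified Lean document; each statement's English description precedes it below -/
import Mathlib

section
/- Let (Z_i)_{i≥1} be real-valued random variables on a probability space with E[Z_i] = μ and E[Z_i^4] < ∞ for all i, and let (d_n), (K_n) be sequences of positive integers with n = K_n · d_n for each n in an index sequence. Suppose: (i) d_n → ∞ and K_n → ∞ as n → ∞; (ii) there is σ² ∈ (0, ∞) such that sup_{1≤k≤K_n} | d_n · E[(W_{n,k} − μ)²] − σ² | → 0 as n → ∞; (iii) there is a constant C < ∞ such that n² · E[(ΔW_n − μ)^4] ≤ C for all n and d_n² · E[(W_{n,k} − μ)^4] ≤ C for all n and all 1 ≤ k ≤ K_n; (iv) for each n, the block random vectors (Z_{(k−1)d_n+1}, …, Z_{k d_n}), k = 1, …, K_n, are pairwise independent. Then the blockwise variance estimator σ̂_n² converges to σ² in L², i.e., E[(σ̂_n² − σ²)²] → 0 as n → ∞. -/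
open MeasureTheory ProbabilityTheory Filter Topology
open scoped ENNReal

variable {Ω : Type*} [MeasurableSpace Ω]

/-- The overall mean `ΔW_n = (1/n) ∑_{i=1}^n Z_i`. -/
noncomputable def overallMean (Z : ℕ → Ω → ℝ) (n : ℕ) (ω : Ω) : ℝ :=
  (∑ i ∈ Finset.Icc 1 n, Z i ω) / n

/-- The `k`-th block mean `W_{n,k} = (1/d) ∑_{i=(k-1)d+1}^{kd} Z_i`. -/
noncomputable def blockMean (Z : ℕ → Ω → ℝ) (d k : ℕ) (ω : Ω) : ℝ :=
  (∑ i ∈ Finset.Ioc ((k - 1) * d) (k * d), Z i ω) / d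

/-- The blockwise variance estimator
`σ̂² = (d/K) ∑_{k=1}^K (W_k − ΔW_n)²`, where `n = K·d`. -/
noncomputable def blockVarEst (Z : ℕ → Ω → ℝ) (d K : ℕ) (ω : Ω) : ℝ :=
  ((d : ℝ) / K) * ∑ k ∈ Finset.Icc 1 K, (blockMean Z d k ω - overallMean Z (K * d) ω) ^ 2

/-- The `k`-th block of `Z` (indices `(k-1)d+1, …, kd`), as a random vector in `ℝ^d`. -/
def blockVec (Z : ℕ → Ω → ℝ) (d k : ℕ) (ω : Ω) : Fin d → ℝ :=
  fun i => Z ((k - 1) * d + 1 + (i : ℕ)) ω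

section auxlemmas

lemma aux_half : (1:ℝ≥0∞)/2 = 1/4 + 1/4 := by
  rw [ENNReal.div_add_div_same, ENNReal.div_eq_div_iff] <;> norm_num

lemma aux_one : (1:ℝ≥0∞)/1 = 1/2 + 1/2 := by
  rw [ENNReal.div_add_div_same, ENNReal.div_eq_div_iff] <;> norm_num

lemma aux_memLp4 (P : Measure Ω) (f : Ω → ℝ) (hm : Measurable f)
    (h4 : Integrable (fun ω => f ω ^ 4) P) : MemLp f 4 P := by
  rw [← memLp_norm_rpow_iff (q := 4) hm.aestronglyMeasurable (by norm_num) (by norm_num)]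
  have h44 : (4:ℝ≥0∞)/4 = 1 := ENNReal.div_self (by norm_num) (by norm_num)
  rw [h44, memLp_one_iff_integrable]
  have : (fun ω => ‖f ω‖ ^ (4:ℝ≥0∞).toReal) = fun ω => f ω ^ 4 := by
    funext ω
    rw [show ((4:ℝ≥0∞).toReal) = ((4:ℕ):ℝ) by norm_num, Real.rpow_natCast]
    rw [Real.norm_eq_abs, ← abs_pow, abs_of_nonneg (by positivity)]
  rw [this]; exact h4

lemma aux_sq_memLp2 (P : Measure Ω) (f : Ω → ℝ) (hf : MemLp f 4 P) :
    MemLp (fun ω => f ω ^ 2) 2 P := by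
  have h := hf.smul hf (hpqr := ⟨by simpa only [one_div] using aux_half.symm⟩)
  have e : (f • f) = fun ω => f ω ^ 2 := by funext ω; simp [sq]
  rwa [e] at h

lemma aux_mul_integrable (P : Measure Ω) (f g : Ω → ℝ) (hf : MemLp f 2 P)
    (hg : MemLp g 2 P) : Integrable (fun ω => f ω * g ω) P := by
  have h := hg.smul hf (hpqr := ⟨by simpa only [one_div] using aux_one.symm⟩)
  have e : (f • g) = fun ω => f ω * g ω := by funext ω; simp
  rw [e] at h
  exact memLp_one_iff_integrable.mp h

lemma aux_pow4_integrable (P : Measure Ω) (f : Ω → ℝ) (hf : MemLp f 4 P) :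
    Integrable (fun ω => f ω ^ 4) P := by
  have h := (aux_sq_memLp2 P f hf).integrable_sq
  have e : (fun ω => (f ω ^ 2) ^ 2) = fun ω => f ω ^ 4 := by funext ω; ring
  rwa [e] at h

lemma aux_sum_blocks (f : ℕ → ℝ) (dd Kk : ℕ) :
    ∑ i ∈ Finset.Icc 1 (Kk * dd), f i
      = ∑ k ∈ Finset.Icc 1 Kk, ∑ i ∈ Finset.Ioc ((k - 1) * dd) (k * dd), f i := by
  induction Kk with
  | zero => simp
  | succ K ih =>
    rw [Finset.sum_Icc_succ_top (Nat.one_le_iff_ne_zero.2 (Nat.succ_ne_zero K))]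
    rw [← ih]
    have hsplit : ∑ i ∈ Finset.Ioc 0 (K * dd), f i + ∑ i ∈ Finset.Ioc (K * dd) ((K+1) * dd), f i
        = ∑ i ∈ Finset.Ioc 0 ((K+1) * dd), f i :=
      Finset.sum_Ioc_consecutive f (Nat.zero_le _) (by nlinarith)
    have e0 : ∀ n : ℕ, Finset.Icc 1 n = Finset.Ioc 0 n := fun n => Finset.Icc_add_one_left_eq_Ioc 0 n
    rw [e0, e0, ← hsplit]
    norm_num

lemma aux_overallMean (Z : ℕ → Ω → ℝ) (dd Kk : ℕ) (hdd : 0 < dd) (ω : Ω) :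
    overallMean Z (Kk * dd) ω = (∑ k ∈ Finset.Icc 1 Kk, blockMean Z dd k ω) / Kk := by
  unfold overallMean
  rw [aux_sum_blocks (fun i => Z i ω) dd Kk]
  have hb : ∀ k ∈ Finset.Icc 1 Kk, (∑ i ∈ Finset.Ioc ((k-1)*dd) (k*dd), Z i ω)
      = (dd : ℝ) * blockMean Z dd k ω := by
    intro k _
    unfold blockMean
    field_simp
  rw [Finset.sum_congr rfl hb, ← Finset.mul_sum]
  push_cast
  rw [mul_comm (Kk:ℝ) (dd:ℝ)]
  exact mul_div_mul_left _ _ (by positivity)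

lemma aux_blockMean_vec (Z : ℕ → Ω → ℝ) (dd k : ℕ) (hk : 1 ≤ k) (ω : Ω) :
    blockMean Z dd k ω = (∑ i : Fin dd, blockVec Z dd k ω i) / dd := by
  unfold blockMean blockVec
  congr 1
  have hkd : k * dd = (k - 1) * dd + dd := by
    have h1 : k - 1 + 1 = k := Nat.succ_pred_eq_of_pos hk
    nlinarith [h1]
  rw [hkd, ← Finset.Ico_add_one_add_one_eq_Ioc, Finset.sum_Ico_eq_sum_range,
    Fin.sum_univ_eq_sum_range (fun i => Z ((k - 1) * dd + 1 + i) ω) dd]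
  have hcard : (k - 1) * dd + dd + 1 - ((k - 1) * dd + 1) = dd := by omega
  rw [hcard]

lemma aux_sq_decomp (s : Finset ℕ) (W : ℕ → ℝ) (Δ μ : ℝ)
    (hS : ∑ k ∈ s, W k = s.card * Δ) :
    ∑ k ∈ s, (W k - Δ) ^ 2 = ∑ k ∈ s, (W k - μ) ^ 2 - s.card * (Δ - μ) ^ 2 := by
  have h1 : ∀ k ∈ s, (W k - Δ) ^ 2 - (W k - μ) ^ 2 = (μ - Δ) * 2 * W k + (Δ ^ 2 - μ ^ 2) :=
    fun k _ => by ring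
  have h2 : ∑ k ∈ s, ((W k - Δ) ^ 2 - (W k - μ) ^ 2)
      = (μ - Δ) * 2 * (∑ k ∈ s, W k) + s.card * (Δ ^ 2 - μ ^ 2) := by
    rw [Finset.sum_congr rfl h1, Finset.sum_add_distrib, Finset.sum_const, nsmul_eq_mul,
      ← Finset.mul_sum]
  rw [Finset.sum_sub_distrib, hS] at h2
  linear_combination h2

lemma aux_est_identity (Z : ℕ → Ω → ℝ) (μ : ℝ) (dd Kk : ℕ) (hdd : 0 < dd) (hKk : 0 < Kk)
    (ω : Ω) :
    blockVarEst Z dd Kk ω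
      = (dd : ℝ) / Kk * ∑ k ∈ Finset.Icc 1 Kk, (blockMean Z dd k ω - μ) ^ 2
        - dd * (overallMean Z (Kk * dd) ω - μ) ^ 2 := by
  have hKne : (Kk : ℝ) ≠ 0 := by positivity
  have hS : ∑ k ∈ Finset.Icc 1 Kk, blockMean Z dd k ω
      = ((Finset.Icc 1 Kk).card : ℝ) * overallMean Z (Kk * dd) ω := by
    rw [aux_overallMean Z dd Kk hdd ω, Nat.card_Icc]
    simp
    field_simp
  unfold blockVarEst
  rw [aux_sq_decomp (Finset.Icc 1 Kk) (fun k => blockMean Z dd k ω)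
    (overallMean Z (Kk * dd) ω) μ hS, Nat.card_Icc]
  simp only [Nat.add_sub_cancel]
  field_simp

lemma aux_main_bound (P : Measure Ω) [IsProbabilityMeasure P]
    (Z : ℕ → Ω → ℝ) (μ σ2 C ε : ℝ) (dd Kk : ℕ) (hdd : 0 < dd) (hKk : 0 < Kk)
    (hε : 0 ≤ ε)
    (hZ4 : ∀ i, MemLp (Z i) 4 P)
    (hvar' : ∀ k, 1 ≤ k → k ≤ Kk →
      |(dd : ℝ) * ∫ ω, (blockMean Z dd k ω - μ) ^ 2 ∂P - σ2| ≤ ε)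
    (hC1 : ((Kk * dd : ℕ) : ℝ) ^ 2 * ∫ ω, (overallMean Z (Kk * dd) ω - μ) ^ 4 ∂P ≤ C)
    (hC2 : ∀ k, 1 ≤ k → k ≤ Kk →
      (dd : ℝ) ^ 2 * ∫ ω, (blockMean Z dd k ω - μ) ^ 4 ∂P ≤ C)
    (hindep' : ∀ k k', 1 ≤ k → k ≤ Kk → 1 ≤ k' → k' ≤ Kk → k ≠ k' →
      IndepFun (blockVec Z dd k) (blockVec Z dd k') P) :
    ∫ ω, (blockVarEst Z dd Kk ω - σ2) ^ 2 ∂P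
      ≤ 2 * (ε ^ 2 + (2 * C + 2 * σ2 ^ 2) / Kk) + 2 * (C / (Kk : ℝ) ^ 2) := by
  classical
  have hKne : (Kk : ℝ) ≠ 0 := by positivity
  have hKpos : (0:ℝ) < Kk := by positivity
  have hdne : (dd : ℝ) ≠ 0 := by positivity
  set M : ℝ := 2 * C + 2 * σ2 ^ 2 with hM
  -- the centered block means and the centered overall mean
  set Y : ℕ → Ω → ℝ := fun k ω => blockMean Z dd k ω - μ with hY
  set Δ : Ω → ℝ := fun ω => overallMean Z (Kk * dd) ω - μ with hΔ
  set ξ : ℕ → Ω → ℝ := fun k ω => (dd : ℝ) * (Y k ω) ^ 2 - σ2 with hξ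
  set A : Ω → ℝ := fun ω => (∑ k ∈ Finset.Icc 1 Kk, ξ k ω) / Kk with hA
  set B : Ω → ℝ := fun ω => (dd : ℝ) * (Δ ω) ^ 2 with hB
  -- membership facts
  have hWL4 : ∀ k, MemLp (fun ω => blockMean Z dd k ω) 4 P := by
    intro k
    have h0 : MemLp (fun ω => ∑ i ∈ Finset.Ioc ((k-1)*dd) (k*dd), Z i ω) 4 P :=
      memLp_finset_sum _ (fun i _ => hZ4 i)
    have := h0.const_mul ((dd : ℝ)⁻¹)
    have e : (fun ω => (dd:ℝ)⁻¹ * ∑ i ∈ Finset.Ioc ((k-1)*dd) (k*dd), Z i ω)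
        = fun ω => blockMean Z dd k ω := by
      funext ω; simp only [blockMean]; ring
    rwa [e] at this
  have hYL4 : ∀ k, MemLp (Y k) 4 P := fun k => (hWL4 k).sub (memLp_const μ)
  have hY2L2 : ∀ k, MemLp (fun ω => (Y k ω) ^ 2) 2 P := fun k => aux_sq_memLp2 P _ (hYL4 k)
  have hY2int : ∀ k, Integrable (fun ω => (Y k ω) ^ 2) P :=
    fun k => (hY2L2 k).integrable one_le_two
  have hY4int : ∀ k, Integrable (fun ω => (Y k ω) ^ 4) P :=
    fun k => aux_pow4_integrable P _ (hYL4 k)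
  have hξL2 : ∀ k, MemLp (ξ k) 2 P := by
    intro k
    exact ((hY2L2 k).const_mul (dd : ℝ)).sub (memLp_const σ2)
  have hξint : ∀ k, Integrable (ξ k) P := fun k => (hξL2 k).integrable one_le_two
  have hξ2int : ∀ k, Integrable (fun ω => (ξ k ω) ^ 2) P := fun k => (hξL2 k).integrable_sq
  have hprod : ∀ k k', Integrable (fun ω => ξ k ω * ξ k' ω) P :=
    fun k k' => aux_mul_integrable P _ _ (hξL2 k) (hξL2 k')
  have hOL4 : MemLp (fun ω => overallMean Z (Kk * dd) ω) 4 P := by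
    have h0 : MemLp (fun ω => ∑ i ∈ Finset.Icc 1 (Kk*dd), Z i ω) 4 P :=
      memLp_finset_sum _ (fun i _ => hZ4 i)
    have := h0.const_mul (((Kk*dd : ℕ) : ℝ)⁻¹)
    have e : (fun ω => ((Kk*dd : ℕ):ℝ)⁻¹ * ∑ i ∈ Finset.Icc 1 (Kk*dd), Z i ω)
        = fun ω => overallMean Z (Kk*dd) ω := by
      funext ω; simp only [overallMean]; ring
    rwa [e] at this
  have hΔL4 : MemLp Δ 4 P := hOL4.sub (memLp_const μ)
  have hΔ2L2 : MemLp (fun ω => (Δ ω) ^ 2) 2 P := aux_sq_memLp2 P _ hΔL4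
  have hΔ4int : Integrable (fun ω => (Δ ω) ^ 4) P := aux_pow4_integrable P _ hΔL4
  have hBL2 : MemLp B 2 P := hΔ2L2.const_mul (dd : ℝ)
  have hAL2 : MemLp A 2 P := by
    have h0 : MemLp (fun ω => ∑ k ∈ Finset.Icc 1 Kk, ξ k ω) 2 P :=
      memLp_finset_sum _ (fun k _ => hξL2 k)
    have := h0.const_mul ((Kk : ℝ)⁻¹)
    have e : (fun ω => (Kk:ℝ)⁻¹ * ∑ k ∈ Finset.Icc 1 Kk, ξ k ω) = A := by
      funext ω; simp only [hA]; ring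
    rwa [e] at this
  have hA2int : Integrable (fun ω => (A ω) ^ 2) P := hAL2.integrable_sq
  have hB2int : Integrable (fun ω => (B ω) ^ 2) P := hBL2.integrable_sq
  have hABL2 : MemLp (fun ω => A ω - B ω) 2 P := hAL2.sub hBL2
  have hAB2int : Integrable (fun ω => (A ω - B ω) ^ 2) P := hABL2.integrable_sq
  -- pointwise identity
  have hpt : ∀ ω, blockVarEst Z dd Kk ω - σ2 = A ω - B ω := by
    intro ω
    rw [aux_est_identity Z μ dd Kk hdd hKk ω]
    simp only [hA, hξ, hB]
    rw [Finset.sum_sub_distrib, Finset.sum_const, Nat.card_Icc, Nat.add_sub_cancel,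
      ← Finset.mul_sum, nsmul_eq_mul]
    field_simp
    ring
  -- step 1 : reduce to A and B
  have h1 : ∫ ω, (blockVarEst Z dd Kk ω - σ2) ^ 2 ∂P = ∫ ω, (A ω - B ω) ^ 2 ∂P := by
    apply integral_congr_ae
    filter_upwards with ω
    rw [hpt ω]
  -- step 2 : ∫ (A-B)² ≤ 2∫A² + 2∫B²
  have h2 : ∫ ω, (A ω - B ω) ^ 2 ∂P
      ≤ 2 * ∫ ω, (A ω) ^ 2 ∂P + 2 * ∫ ω, (B ω) ^ 2 ∂P := by
    have hle : ∫ ω, (A ω - B ω) ^ 2 ∂P ≤ ∫ ω, (2 * (A ω) ^ 2 + 2 * (B ω) ^ 2) ∂P := by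
      apply integral_mono hAB2int ((hA2int.const_mul 2).add (hB2int.const_mul 2))
      intro ω
      simp only [Pi.add_apply]
      nlinarith [sq_nonneg (A ω + B ω)]
    calc ∫ ω, (A ω - B ω) ^ 2 ∂P ≤ ∫ ω, (2 * (A ω) ^ 2 + 2 * (B ω) ^ 2) ∂P := hle
      _ = 2 * ∫ ω, (A ω) ^ 2 ∂P + 2 * ∫ ω, (B ω) ^ 2 ∂P := by
          rw [integral_add (hA2int.const_mul 2) (hB2int.const_mul 2),
            integral_const_mul, integral_const_mul]
  -- step 3 : ∫ B² ≤ C / Kk²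
  have h3 : ∫ ω, (B ω) ^ 2 ∂P ≤ C / (Kk : ℝ) ^ 2 := by
    have e : ∫ ω, (B ω) ^ 2 ∂P = (dd:ℝ)^2 * ∫ ω, (Δ ω) ^ 4 ∂P := by
      rw [← integral_const_mul]
      apply integral_congr_ae
      filter_upwards with ω
      simp only [hB]
      ring
    rw [e]
    have hc : ((Kk * dd : ℕ) : ℝ) ^ 2 = (Kk:ℝ)^2 * (dd:ℝ)^2 := by push_cast; ring
    rw [hc] at hC1
    rw [le_div_iff₀ (by positivity : (0:ℝ) < (Kk:ℝ)^2)]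
    calc (dd:ℝ)^2 * (∫ ω, (Δ ω) ^ 4 ∂P) * (Kk:ℝ)^2
        = (Kk:ℝ)^2 * (dd:ℝ)^2 * ∫ ω, (Δ ω) ^ 4 ∂P := by ring
      _ ≤ C := hC1
  -- step 4 : expectations of ξ
  have hEξ : ∀ k, ∫ ω, ξ k ω ∂P = (dd:ℝ) * (∫ ω, (Y k ω) ^ 2 ∂P) - σ2 := by
    intro k
    simp only [hξ]
    rw [integral_sub ((hY2int k).const_mul _) (integrable_const σ2), integral_const_mul,
      integral_const]
    simp
  have hEξ_abs : ∀ k, 1 ≤ k → k ≤ Kk → |∫ ω, ξ k ω ∂P| ≤ ε := by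
    intro k hk1 hk2
    rw [hEξ k]
    exact hvar' k hk1 hk2
  -- step 5 : second moment of ξ
  have hEξ2 : ∀ k, 1 ≤ k → k ≤ Kk → ∫ ω, (ξ k ω) ^ 2 ∂P ≤ M := by
    intro k hk1 hk2
    have hle : ∫ ω, (ξ k ω) ^ 2 ∂P
        ≤ ∫ ω, (2 * (dd:ℝ)^2 * (Y k ω) ^ 4 + 2 * σ2 ^ 2) ∂P := by
      apply integral_mono (hξ2int k) (((hY4int k).const_mul _).add (integrable_const _))
      intro ω
      simp only [hξ, Pi.add_apply]
      have h4' : Y k ω ^ 4 = (Y k ω ^ 2) ^ 2 := by ring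
      nlinarith [sq_nonneg ((dd:ℝ) * (Y k ω)^2 + σ2)]
    have heq : ∫ ω, (2 * (dd:ℝ)^2 * (Y k ω) ^ 4 + 2 * σ2 ^ 2) ∂P
        = 2 * ((dd:ℝ)^2 * ∫ ω, (Y k ω) ^ 4 ∂P) + 2 * σ2 ^ 2 := by
      rw [integral_add ((hY4int k).const_mul _) (integrable_const _), integral_const_mul,
        integral_const]
      simp
      ring
    have := hC2 k hk1 hk2
    rw [heq] at hle
    simp only [hM]
    nlinarith [this]
  -- step 6 : independence of the ξ's
  have hindξ : ∀ k k', 1 ≤ k → k ≤ Kk → 1 ≤ k' → k' ≤ Kk → k ≠ k' →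
      IndepFun (ξ k) (ξ k') P := by
    intro k k' hk1 hk2 hk1' hk2' hne
    set φ : (Fin dd → ℝ) → ℝ := fun v => (dd:ℝ) * ((∑ i, v i) / dd - μ) ^ 2 - σ2 with hφdef
    have hφ : Measurable φ := by
      apply Measurable.sub ?_ measurable_const
      apply Measurable.const_mul
      apply Measurable.pow_const
      apply Measurable.sub ?_ measurable_const
      apply Measurable.div_const
      exact Finset.measurable_sum _ (fun i _ => measurable_pi_apply i)
    have hcomp : ∀ j, 1 ≤ j → ξ j = φ ∘ blockVec Z dd j := by
      intro j hj
      funext ω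
      simp only [hφdef, Function.comp_apply, hξ, hY]
      rw [aux_blockMean_vec Z dd j hj ω]
    rw [hcomp k hk1, hcomp k' hk1']
    exact (hindep' k k' hk1 hk2 hk1' hk2' hne).comp hφ hφ
  have hEprod : ∀ k k', 1 ≤ k → k ≤ Kk → 1 ≤ k' → k' ≤ Kk → k ≠ k' →
      ∫ ω, ξ k ω * ξ k' ω ∂P = (∫ ω, ξ k ω ∂P) * ∫ ω, ξ k' ω ∂P := by
    intro k k' hk1 hk2 hk1' hk2' hne
    have := (hindξ k k' hk1 hk2 hk1' hk2' hne).integral_mul_eq_mul_integral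
      (hξint k).aestronglyMeasurable (hξint k').aestronglyMeasurable
    simpa [Pi.mul_apply] using this
  -- step 7 : bound on ∫ A²
  have h7 : ∫ ω, (A ω) ^ 2 ∂P ≤ ε ^ 2 + M / Kk := by
    have hAexp : ∫ ω, (A ω) ^ 2 ∂P
        = (∑ k ∈ Finset.Icc 1 Kk, ∑ k' ∈ Finset.Icc 1 Kk, ∫ ω, ξ k ω * ξ k' ω ∂P)
          / (Kk:ℝ) ^ 2 := by
      have e : ∀ ω, (A ω) ^ 2
          = (∑ k ∈ Finset.Icc 1 Kk, ∑ k' ∈ Finset.Icc 1 Kk, ξ k ω * ξ k' ω) / (Kk:ℝ)^2 := by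
        intro ω
        simp only [hA]
        rw [div_pow, sq, Finset.sum_mul_sum]
      rw [integral_congr_ae (Eventually.of_forall e), integral_div]
      congr 1
      rw [integral_finset_sum _ (fun k _ => integrable_finset_sum _ (fun k' _ => hprod k k'))]
      exact Finset.sum_congr rfl (fun k _ => integral_finset_sum _ (fun k' _ => hprod k k'))
    have hsum : ∑ k ∈ Finset.Icc 1 Kk, ∑ k' ∈ Finset.Icc 1 Kk, ∫ ω, ξ k ω * ξ k' ω ∂P
        ≤ (Kk:ℝ) * ((Kk:ℝ) * ε ^ 2 + M) := by
      have hinner : ∀ k ∈ Finset.Icc 1 Kk,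
          ∑ k' ∈ Finset.Icc 1 Kk, ∫ ω, ξ k ω * ξ k' ω ∂P ≤ (Kk:ℝ) * ε ^ 2 + M := by
        intro k hkmem
        obtain ⟨hk1, hk2⟩ := Finset.mem_Icc.mp hkmem
        have hpair : ∀ k' ∈ Finset.Icc 1 Kk, ∫ ω, ξ k ω * ξ k' ω ∂P
            ≤ if k' = k then M else ε ^ 2 := by
          intro k' hkmem'
          obtain ⟨hk1', hk2'⟩ := Finset.mem_Icc.mp hkmem'
          by_cases hcase : k' = k
          · subst hcase
            rw [if_pos rfl]
            have e2 : ∫ ω, ξ k' ω * ξ k' ω ∂P = ∫ ω, (ξ k' ω) ^ 2 ∂P := by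
              apply integral_congr_ae
              filter_upwards with ω
              ring
            rw [e2]
            exact hEξ2 k' hk1' hk2'
          · rw [if_neg hcase]
            rw [hEprod k k' hk1 hk2 hk1' hk2' (fun h => hcase h.symm)]
            calc (∫ ω, ξ k ω ∂P) * ∫ ω, ξ k' ω ∂P
                ≤ |(∫ ω, ξ k ω ∂P) * ∫ ω, ξ k' ω ∂P| := le_abs_self _
              _ = |∫ ω, ξ k ω ∂P| * |∫ ω, ξ k' ω ∂P| := abs_mul _ _
              _ ≤ ε * ε := by
                  apply mul_le_mul (hEξ_abs k hk1 hk2) (hEξ_abs k' hk1' hk2')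
                    (abs_nonneg _) hε
              _ = ε ^ 2 := by ring
        calc ∑ k' ∈ Finset.Icc 1 Kk, ∫ ω, ξ k ω * ξ k' ω ∂P
            ≤ ∑ k' ∈ Finset.Icc 1 Kk, (if k' = k then M else ε ^ 2) :=
              Finset.sum_le_sum hpair
          _ = ∑ k' ∈ Finset.Icc 1 Kk, (ε ^ 2 + if k' = k then M - ε ^ 2 else 0) := by
              apply Finset.sum_congr rfl
              intro k' _
              split <;> ring
          _ = (Kk:ℝ) * ε ^ 2 + (M - ε ^ 2) := by
              rw [Finset.sum_add_distrib, Finset.sum_const, Nat.card_Icc,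
                Nat.add_sub_cancel, nsmul_eq_mul, Finset.sum_ite_eq' (Finset.Icc 1 Kk) k
                  (fun _ => M - ε ^ 2), if_pos hkmem]
          _ ≤ (Kk:ℝ) * ε ^ 2 + M := by nlinarith [sq_nonneg ε]
      calc ∑ k ∈ Finset.Icc 1 Kk, ∑ k' ∈ Finset.Icc 1 Kk, ∫ ω, ξ k ω * ξ k' ω ∂P
          ≤ ∑ _k ∈ Finset.Icc 1 Kk, ((Kk:ℝ) * ε ^ 2 + M) := Finset.sum_le_sum hinner
        _ = (Kk:ℝ) * ((Kk:ℝ) * ε ^ 2 + M) := by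
            rw [Finset.sum_const, Nat.card_Icc, Nat.add_sub_cancel, nsmul_eq_mul]
    rw [hAexp]
    rw [div_le_iff₀ (by positivity : (0:ℝ) < (Kk:ℝ)^2)]
    calc ∑ k ∈ Finset.Icc 1 Kk, ∑ k' ∈ Finset.Icc 1 Kk, ∫ ω, ξ k ω * ξ k' ω ∂P
        ≤ (Kk:ℝ) * ((Kk:ℝ) * ε ^ 2 + M) := hsum
      _ = (ε ^ 2 + M / Kk) * (Kk:ℝ)^2 := by field_simp
  -- combine
  rw [h1]
  calc ∫ ω, (A ω - B ω) ^ 2 ∂P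
      ≤ 2 * ∫ ω, (A ω) ^ 2 ∂P + 2 * ∫ ω, (B ω) ^ 2 ∂P := h2
    _ ≤ 2 * (ε ^ 2 + M / Kk) + 2 * (C / (Kk:ℝ)^2) := by
        have := h3
        have := h7
        nlinarith
    _ = 2 * (ε ^ 2 + (2 * C + 2 * σ2 ^ 2) / Kk) + 2 * (C / (Kk : ℝ) ^ 2) := by rw [hM]

end auxlemmas

/-- **Theorem 1** (L²-consistency of the blockwise bootstrap variance estimator).
Under block-level moment conditions and pairwise independence of the blocks,
the blockwise variance estimator `σ̂_n²` converges to `σ²` in `L²`. -/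
theorem blockwise_variance_estimator_L2_consistent
    (P : Measure Ω) [IsProbabilityMeasure P]
    (Z : ℕ → Ω → ℝ) (μ σ2 : ℝ) (d K : ℕ → ℕ)
    (hmeas : ∀ i, Measurable (Z i))
    (hmom : ∀ i, Integrable (fun ω => (Z i ω) ^ 4) P)
    (hmean : ∀ i, ∫ ω, Z i ω ∂P = μ)
    (hd : ∀ m, 0 < d m) (hK : ∀ m, 0 < K m)
    -- (i) `d_n → ∞` and `K_n → ∞`
    (hdtop : Tendsto (fun m => d m) atTop atTop)
    (hKtop : Tendsto (fun m => K m) atTop atTop)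
    -- (ii) `sup_{1≤k≤K_n} |d_n · E[(W_{n,k} − μ)²] − σ²| → 0` with `σ² ∈ (0, ∞)`
    (hσ2 : 0 < σ2)
    (hvar : ∀ ε > (0 : ℝ), ∃ N, ∀ m ≥ N, ∀ k, 1 ≤ k → k ≤ K m →
      |(d m : ℝ) * ∫ ω, (blockMean Z (d m) k ω - μ) ^ 2 ∂P - σ2| ≤ ε)
    -- (iii) uniform fourth-moment bounds
    (C : ℝ)
    (hC1 : ∀ m,
      ((K m * d m : ℕ) : ℝ) ^ 2 * ∫ ω, (overallMean Z (K m * d m) ω - μ) ^ 4 ∂P ≤ C)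
    (hC2 : ∀ m, ∀ k, 1 ≤ k → k ≤ K m →
      (d m : ℝ) ^ 2 * ∫ ω, (blockMean Z (d m) k ω - μ) ^ 4 ∂P ≤ C)
    -- (iv) pairwise independence of the block random vectors
    (hindep : ∀ m, ∀ k k', 1 ≤ k → k ≤ K m → 1 ≤ k' → k' ≤ K m → k ≠ k' →
      IndepFun (blockVec Z (d m) k) (blockVec Z (d m) k') P) :
    Tendsto (fun m => ∫ ω, (blockVarEst Z (d m) (K m) ω - σ2) ^ 2 ∂P) atTop (𝓝 0) := by
  have hZ4 : ∀ i, MemLp (Z i) 4 P := fun i => aux_memLp4 P (Z i) (hmeas i) (hmom i)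
  rw [Metric.tendsto_atTop]
  intro δ hδ
  set ε := Real.sqrt (δ / 8) with hεdef
  have hεpos : 0 < ε := Real.sqrt_pos.mpr (by linarith)
  have hεsq : ε ^ 2 = δ / 8 := Real.sq_sqrt (by linarith)
  obtain ⟨N₁, hN₁⟩ := hvar ε hεpos
  set M : ℝ := 2 * C + 2 * σ2 ^ 2 with hM
  set Nk : ℕ := max (⌈8 * M / δ⌉₊) (⌈8 * C / δ⌉₊) + 1 with hNk
  obtain ⟨N₂, hN₂⟩ := Filter.eventually_atTop.mp (hKtop.eventually_ge_atTop Nk)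
  refine ⟨max N₁ N₂, fun m hm => ?_⟩
  have hm1 : N₁ ≤ m := le_trans (le_max_left _ _) hm
  have hm2 : N₂ ≤ m := le_trans (le_max_right _ _) hm
  have hKm : Nk ≤ K m := hN₂ m hm2
  have hK1 : (1:ℝ) ≤ (K m : ℝ) := by
    have : 1 ≤ K m := le_trans (Nat.le_add_left 1 _) hKm
    exact_mod_cast this
  have hKMnat : ⌈8 * M / δ⌉₊ ≤ K m := le_trans (le_trans (le_max_left _ _) (Nat.le_succ _)) hKm
  have hKCnat : ⌈8 * C / δ⌉₊ ≤ K m := le_trans (le_trans (le_max_right _ _) (Nat.le_succ _)) hKm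
  have hKM : 8 * M / δ ≤ (K m : ℝ) := le_trans (Nat.le_ceil _) (by exact_mod_cast hKMnat)
  have hKC : 8 * C / δ ≤ (K m : ℝ) := le_trans (Nat.le_ceil _) (by exact_mod_cast hKCnat)
  have hbound := aux_main_bound P Z μ σ2 C ε (d m) (K m) (hd m) (hK m) hεpos.le hZ4
    (fun k hk1 hk2 => hN₁ m hm1 k hk1 hk2) (hC1 m) (hC2 m) (hindep m)
  have hnonneg : 0 ≤ ∫ ω, (blockVarEst Z (d m) (K m) ω - σ2) ^ 2 ∂P :=
    integral_nonneg (fun ω => sq_nonneg _)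
  rw [Real.dist_eq, sub_zero, abs_of_nonneg hnonneg]
  have hKpos : (0:ℝ) < (K m : ℝ) := by linarith
  have h8M : 8 * M ≤ δ * (K m : ℝ) := by
    rw [div_le_iff₀ hδ] at hKM
    linarith [hKM]
  have h8C : 8 * C ≤ δ * (K m : ℝ) := by
    rw [div_le_iff₀ hδ] at hKC
    linarith [hKC]
  have h5 : M / (K m : ℝ) ≤ δ / 8 := by
    rw [div_le_div_iff₀ hKpos (by norm_num : (0:ℝ) < 8)]
    linarith
  have h6 : C / (K m : ℝ) ^ 2 ≤ δ / 8 := by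
    rw [div_le_div_iff₀ (by positivity) (by norm_num : (0:ℝ) < 8)]
    have hKsq : (K m : ℝ) ≤ (K m : ℝ) ^ 2 := by nlinarith [hK1, hKpos]
    have hKK : δ * (K m : ℝ) ≤ δ * (K m : ℝ) ^ 2 := mul_le_mul_of_nonneg_left hKsq hδ.le
    linarith
  calc ∫ ω, (blockVarEst Z (d m) (K m) ω - σ2) ^ 2 ∂P
      ≤ 2 * (ε ^ 2 + (2 * C + 2 * σ2 ^ 2) / (K m : ℝ)) + 2 * (C / (K m : ℝ) ^ 2) := hbound
    _ ≤ 2 * (δ / 8 + δ / 8) + 2 * (δ / 8) := by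
        rw [hεsq]
        have : (2 * C + 2 * σ2 ^ 2) / (K m : ℝ) = M / (K m : ℝ) := by rw [hM]
        rw [this]
        linarith
    _ < δ := by linarith
end

section
/- Let (Z_i)_{i≥1} be real-valued random variables with E[Z_i] = μ and E[Z_i^4] < ∞ for all i, and let (d_n), (K_n) be sequences of positive integers with n = K_n · d_n. Suppose: (i) K_n → ∞; (ii) there is σ² ∈ (0, ∞) such that sup_{1≤k≤K_n} | d_n · E[(W_{n,k} − μ)²] − σ² | → 0; (iii) there is C < ∞ with d_n² · E[(W_{n,k} − μ)^4] ≤ C for all n and all 1 ≤ k ≤ K_n; (iv) for each n, the block random vectors (Z_{(k−1)d_n+1}, …, Z_{k d_n}), k = 1, …, K_n, are pairwise independent. Then, with t_{n,k} = √d_n · (W_{n,k} − μ), the averaged squared block statistics converge to σ² in L²: E[ ( (1/K_n) Σ_{k=1}^{K_n} t_{n,k}² − σ² )² ] → 0 as n → ∞. -/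
open MeasureTheory ProbabilityTheory Filter Topology

variable {Ω : Type*} [MeasurableSpace Ω]

/-- The standardized block statistic `t_{n,k} = √d_n (W_{n,k} − μ)`. -/
noncomputable def tBlock (Z : ℕ → Ω → ℝ) (d k : ℕ) (μ : ℝ) (ω : Ω) : ℝ :=
  Real.sqrt d * (blockMean Z d k ω - μ)

open scoped ENNReal

section Aux

variable {α : Type*} [MeasurableSpace α] {μ' : Measure α}

lemma memLp_four_of_integrable_pow {f : α → ℝ}
    (hf : AEStronglyMeasurable f μ') (h : Integrable (fun x => f x ^ 4) μ') :
    MemLp f 4 μ' := by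
  rw [← memLp_norm_rpow_iff hf (by norm_num : (4:ℝ≥0∞) ≠ 0) (by norm_num)]
  have h44 : (4:ℝ≥0∞) / 4 = 1 := by
    rw [ENNReal.div_self] <;> norm_num
  rw [h44, memLp_one_iff_integrable]
  apply h.congr
  filter_upwards with x
  have h4 : ((4:ℝ≥0∞)).toReal = (4:ℝ) := by norm_num
  rw [h4, show ((4:ℝ)) = ((4:ℕ):ℝ) by norm_num, Real.rpow_natCast,
    Real.norm_eq_abs, ← abs_pow, abs_of_nonneg (by positivity)]

lemma integrable_pow_four_of_memLp {f : α → ℝ} (h : MemLp f 4 μ') :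
    Integrable (fun x => f x ^ 4) μ' := by
  have h2 := h.integrable_norm_rpow (by norm_num) (by norm_num)
  apply h2.congr
  filter_upwards with x
  have h4 : ((4:ℝ≥0∞)).toReal = (4:ℝ) := by norm_num
  rw [h4, show ((4:ℝ)) = ((4:ℕ):ℝ) by norm_num, Real.rpow_natCast,
    Real.norm_eq_abs, ← abs_pow, abs_of_nonneg (by positivity)]

lemma sum_Ioc_block (f : ℕ → ℝ) (a d : ℕ) :
    ∑ i ∈ Finset.Ioc a (a + d), f i = ∑ j : Fin d, f (a + 1 + (j:ℕ)) := by
  have h2 : ∑ i ∈ Finset.Ioc a (a + d), f i = ∑ j ∈ Finset.range d, f (a + 1 + j) := by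
    rw [← Finset.Ico_add_one_add_one_eq_Ioc, Finset.sum_Ico_eq_sum_range]
    have h3 : a + d + 1 - (a + 1) = d := by omega
    rw [h3]
  rw [h2]
  exact (Fin.sum_univ_eq_sum_range (fun j => f (a + 1 + j)) d).symm

end Aux

lemma blockMean_eq_blockVec (Z : ℕ → Ω → ℝ) (D k : ℕ) (hk : 1 ≤ k) (ω : Ω) :
    blockMean Z D k ω = (∑ i : Fin D, blockVec Z D k ω i) / D := by
  unfold blockMean blockVec
  congr 1
  have h : k * D = (k - 1) * D + D := by
    cases k with
    | zero => omega
    | succ n => simp [Nat.succ_mul]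
  rw [h, sum_Ioc_block (fun i => Z i ω) ((k-1)*D) D]

lemma main_bound (P : Measure Ω) [IsProbabilityMeasure P]
    (Z : ℕ → Ω → ℝ) (μ σ2 : ℝ) (D Kn : ℕ) (hKn : 0 < Kn)
    (hmeas : ∀ i, Measurable (Z i))
    (hmom : ∀ i, Integrable (fun ω => (Z i ω) ^ 4) P)
    (hσ2 : 0 < σ2) (ε : ℝ) (hε : 0 ≤ ε) (C : ℝ)
    (hvarb : ∀ k, 1 ≤ k → k ≤ Kn → |(D:ℝ) * ∫ ω, (blockMean Z D k ω - μ)^2 ∂P - σ2| ≤ ε)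
    (hCb : ∀ k, 1 ≤ k → k ≤ Kn → (D:ℝ)^2 * ∫ ω, (blockMean Z D k ω - μ)^4 ∂P ≤ C)
    (hind : ∀ k k', 1 ≤ k → k ≤ Kn → 1 ≤ k' → k' ≤ Kn → k ≠ k' →
      IndepFun (blockVec Z D k) (blockVec Z D k') P) :
    ∫ ω, ((∑ k ∈ Finset.Icc 1 Kn, (tBlock Z D k μ ω)^2)/(Kn:ℝ) - σ2)^2 ∂P
      ≤ (C + σ2^2)/(Kn:ℝ) + ε^2 := by
  classical
  set A := Finset.Icc 1 Kn with hA
  set Y : ℕ → Ω → ℝ := fun k ω => (D:ℝ) * (blockMean Z D k ω - μ)^2 - σ2 with hYdef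
  have hKnR : (0:ℝ) < (Kn:ℝ) := by exact_mod_cast hKn
  -- measurability / integrability
  have hbm : ∀ k, Measurable (blockMean Z D k) := fun k =>
    (Finset.measurable_sum _ fun i _ => hmeas i).div_const _
  have hZ4 : ∀ i, MemLp (Z i) 4 P := fun i =>
    memLp_four_of_integrable_pow (hmeas i).aestronglyMeasurable (hmom i)
  have hg4 : ∀ k, MemLp (fun ω => blockMean Z D k ω - μ) 4 P := by
    intro k
    have hsum : MemLp (fun ω => ∑ i ∈ Finset.Ioc ((k-1)*D) (k*D), Z i ω) 4 P :=
      memLp_finset_sum _ fun i _ => hZ4 i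
    have hdiv : MemLp (fun ω => (∑ i ∈ Finset.Ioc ((k-1)*D) (k*D), Z i ω) / (D:ℝ)) 4 P := by
      simpa [div_eq_inv_mul] using hsum.const_mul ((D:ℝ)⁻¹)
    exact hdiv.sub (memLp_const μ)
  have hint4 : ∀ k, Integrable (fun ω => (blockMean Z D k ω - μ)^4) P := fun k =>
    integrable_pow_four_of_memLp (hg4 k)
  have hint2 : ∀ k, Integrable (fun ω => (blockMean Z D k ω - μ)^2) P := fun k =>
    ((hg4 k).mono_exponent (by norm_num)).integrable_sq
  have hintY : ∀ k, Integrable (Y k) P := fun k =>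
    ((hint2 k).const_mul _).sub (integrable_const _)
  have hintY2 : ∀ k, Integrable (fun ω => Y k ω * Y k ω) P := by
    intro k
    have h1 : Integrable (fun ω => (D:ℝ)^2 * (blockMean Z D k ω - μ)^4
        - (2*(D:ℝ)*σ2) * (blockMean Z D k ω - μ)^2 + σ2^2) P :=
      (((hint4 k).const_mul _).sub ((hint2 k).const_mul _)).add (integrable_const _)
    exact h1.congr (Filter.Eventually.of_forall fun ω => by simp only [hYdef]; ring)
  -- mean of Y
  have hEY : ∀ k, ∫ ω, Y k ω ∂P = (D:ℝ) * ∫ ω, (blockMean Z D k ω - μ)^2 ∂P - σ2 := by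
    intro k
    simp only [hYdef]
    have ha : Integrable (fun ω => (D:ℝ) * (blockMean Z D k ω - μ)^2) P := (hint2 k).const_mul _
    rw [integral_sub ha (integrable_const _), integral_const_mul, integral_const]
    simp
  have hEYb : ∀ k, 1 ≤ k → k ≤ Kn → |∫ ω, Y k ω ∂P| ≤ ε := by
    intro k h1 h2
    rw [hEY k]
    exact hvarb k h1 h2
  -- independence
  have hψ : Measurable (fun v : Fin D → ℝ => (D:ℝ) * ((∑ i, v i)/(D:ℝ) - μ)^2 - σ2) := by
    have h1 : Measurable fun v : Fin D → ℝ => ∑ i, v i :=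
      Finset.measurable_sum _ fun i _ => measurable_pi_apply i
    exact ((((h1.div_const _).sub_const _).pow_const 2).const_mul _).sub_const _
  have hYcomp : ∀ k, 1 ≤ k →
      Y k = (fun v : Fin D → ℝ => (D:ℝ) * ((∑ i, v i)/(D:ℝ) - μ)^2 - σ2) ∘ blockVec Z D k := by
    intro k hk
    funext ω
    simp only [hYdef, Function.comp_apply]
    rw [blockMean_eq_blockVec Z D k hk ω]
  have hindY : ∀ k k', 1 ≤ k → k ≤ Kn → 1 ≤ k' → k' ≤ Kn → k ≠ k' →
      IndepFun (Y k) (Y k') P := by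
    intro k k' h1 h2 h3 h4 h5
    rw [hYcomp k h1, hYcomp k' h3]
    exact (hind k k' h1 h2 h3 h4 h5).comp hψ hψ
  -- integrability of products
  have hprodInt : ∀ k ∈ A, ∀ j ∈ A, Integrable (fun ω => Y k ω * Y j ω) P := by
    intro k hk j hj
    rcases eq_or_ne k j with rfl | hne
    · exact hintY2 k
    · rw [Finset.mem_Icc] at hk hj
      exact (hindY k j hk.1 hk.2 hj.1 hj.2 hne).integrable_mul (hintY k) (hintY j)
  -- diagonal bound
  have hdiag : ∀ k, 1 ≤ k → k ≤ Kn → ∫ ω, Y k ω * Y k ω ∂P ≤ C + σ2^2 := by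
    intro k h1 h2
    have hrw : ∫ ω, Y k ω * Y k ω ∂P
        = (D:ℝ)^2 * ∫ ω, (blockMean Z D k ω - μ)^4 ∂P
          - (2*(D:ℝ)*σ2) * ∫ ω, (blockMean Z D k ω - μ)^2 ∂P + σ2^2 := by
      have hptw : (fun ω => Y k ω * Y k ω)
          = fun ω => (D:ℝ)^2 * (blockMean Z D k ω - μ)^4
              - (2*(D:ℝ)*σ2) * (blockMean Z D k ω - μ)^2 + σ2^2 := by
        funext ω; simp only [hYdef]; ring
      have ha : Integrable (fun ω => (D:ℝ)^2 * (blockMean Z D k ω - μ)^4) P :=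
        (hint4 k).const_mul _
      have hb : Integrable (fun ω => (2*(D:ℝ)*σ2) * (blockMean Z D k ω - μ)^2) P :=
        (hint2 k).const_mul _
      have hab : Integrable (fun ω => (D:ℝ)^2 * (blockMean Z D k ω - μ)^4
          - (2*(D:ℝ)*σ2) * (blockMean Z D k ω - μ)^2) P := ha.sub hb
      rw [hptw, integral_add hab (integrable_const _), integral_sub ha hb,
        integral_const_mul, integral_const_mul, integral_const]
      simp
    rw [hrw]
    have hnn : 0 ≤ (2*(D:ℝ)*σ2) * ∫ ω, (blockMean Z D k ω - μ)^2 ∂P := by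
      apply mul_nonneg
      · positivity
      · exact integral_nonneg fun ω => by positivity
    have := hCb k h1 h2
    linarith
  -- off-diagonal bound
  have hoff : ∀ k j, 1 ≤ k → k ≤ Kn → 1 ≤ j → j ≤ Kn → k ≠ j →
      ∫ ω, Y k ω * Y j ω ∂P ≤ ε^2 := by
    intro k j h1 h2 h3 h4 h5
    rw [show (∫ ω, Y k ω * Y j ω ∂P) = (∫ ω, Y k ω ∂P) * ∫ ω, Y j ω ∂P from
      (hindY k j h1 h2 h3 h4 h5).integral_mul_eq_mul_integral (hintY k).aestronglyMeasurable
      (hintY j).aestronglyMeasurable]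
    calc (∫ ω, Y k ω ∂P) * ∫ ω, Y j ω ∂P
        ≤ |(∫ ω, Y k ω ∂P) * ∫ ω, Y j ω ∂P| := le_abs_self _
      _ = |∫ ω, Y k ω ∂P| * |∫ ω, Y j ω ∂P| := abs_mul _ _
      _ ≤ ε * ε := mul_le_mul (hEYb k h1 h2) (hEYb j h3 h4) (abs_nonneg _) hε
      _ = ε^2 := (sq ε).symm
  -- rewrite the integrand
  have hpt : ∀ ω, ((∑ k ∈ A, (tBlock Z D k μ ω)^2)/(Kn:ℝ) - σ2)^2
      = (∑ k ∈ A, Y k ω)^2 / (Kn:ℝ)^2 := by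
    intro ω
    have h1 : ∑ k ∈ A, (tBlock Z D k μ ω)^2
        = ∑ k ∈ A, ((D:ℝ) * (blockMean Z D k ω - μ)^2) := by
      refine Finset.sum_congr rfl fun k _ => ?_
      simp only [tBlock]
      rw [mul_pow, Real.sq_sqrt (Nat.cast_nonneg D)]
    have h2 : ∑ k ∈ A, Y k ω
        = (∑ k ∈ A, ((D:ℝ) * (blockMean Z D k ω - μ)^2)) - (Kn:ℝ)*σ2 := by
      simp only [hYdef]
      rw [Finset.sum_sub_distrib, Finset.sum_const, hA, Nat.card_Icc]
      simp [nsmul_eq_mul]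
    rw [h1, h2]
    field_simp
  have hintrw : ∫ ω, ((∑ k ∈ A, (tBlock Z D k μ ω)^2)/(Kn:ℝ) - σ2)^2 ∂P
      = (∑ k ∈ A, ∑ j ∈ A, ∫ ω, Y k ω * Y j ω ∂P) / (Kn:ℝ)^2 := by
    simp_rw [hpt]
    rw [integral_div]
    congr 1
    have hexp : ∀ ω : Ω, (∑ k ∈ A, Y k ω)^2 = ∑ k ∈ A, ∑ j ∈ A, Y k ω * Y j ω := by
      intro ω
      rw [sq, Finset.sum_mul_sum]
    simp_rw [hexp]
    rw [integral_finset_sum A (fun k hk =>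
      integrable_finset_sum A (fun j hj => hprodInt k hk j hj))]
    exact Finset.sum_congr rfl fun k hk =>
      integral_finset_sum A (fun j hj => hprodInt k hk j hj)
  rw [hintrw]
  -- bound the double sum
  have hinner : ∀ k ∈ A, ∑ j ∈ A, ∫ ω, Y k ω * Y j ω ∂P
      ≤ (C + σ2^2) + (Kn:ℝ) * ε^2 := by
    intro k hk
    have hk' := Finset.mem_Icc.mp hk
    rw [← Finset.add_sum_erase A _ hk]
    have herase : ∑ j ∈ A.erase k, ∫ ω, Y k ω * Y j ω ∂P ≤ (A.erase k).card • ε^2 := by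
      apply Finset.sum_le_card_nsmul
      intro j hj
      obtain ⟨hjk, hjA⟩ := Finset.mem_erase.mp hj
      have hj' := Finset.mem_Icc.mp hjA
      exact hoff k j hk'.1 hk'.2 hj'.1 hj'.2 (Ne.symm hjk)
    have hcard : ((A.erase k).card : ℝ) ≤ (Kn:ℝ) := by
      have h1 : (A.erase k).card ≤ A.card := Finset.card_le_card (Finset.erase_subset _ _)
      have h2 : A.card = Kn := by rw [hA, Nat.card_Icc]; omega
      exact_mod_cast h2 ▸ h1
    have herase2 : ∑ j ∈ A.erase k, ∫ ω, Y k ω * Y j ω ∂P ≤ (Kn:ℝ) * ε^2 := by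
      refine herase.trans ?_
      rw [nsmul_eq_mul]
      exact mul_le_mul_of_nonneg_right hcard (by positivity)
    exact add_le_add (hdiag k hk'.1 hk'.2) herase2
  have hsumb : ∑ k ∈ A, ∑ j ∈ A, ∫ ω, Y k ω * Y j ω ∂P
      ≤ (Kn:ℝ) * ((C + σ2^2) + (Kn:ℝ) * ε^2) := by
    calc ∑ k ∈ A, ∑ j ∈ A, ∫ ω, Y k ω * Y j ω ∂P
        ≤ ∑ _k ∈ A, ((C + σ2^2) + (Kn:ℝ) * ε^2) := Finset.sum_le_sum hinner
      _ = (A.card : ℝ) * ((C + σ2^2) + (Kn:ℝ) * ε^2) := by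
          rw [Finset.sum_const, nsmul_eq_mul]
      _ = (Kn:ℝ) * ((C + σ2^2) + (Kn:ℝ) * ε^2) := by
          congr 2
          rw [hA, Nat.card_Icc]; omega
  calc (∑ k ∈ A, ∑ j ∈ A, ∫ ω, Y k ω * Y j ω ∂P) / (Kn:ℝ)^2
      ≤ ((Kn:ℝ) * ((C + σ2^2) + (Kn:ℝ) * ε^2)) / (Kn:ℝ)^2 := by gcongr
    _ = (C + σ2^2)/(Kn:ℝ) + ε^2 := by field_simp

/-- First main step in the proof of Theorem 1: the averaged squared standardized
block statistics `(1/K_n) ∑_{k=1}^{K_n} t_{n,k}²` converge to `σ²` in `L²`. -/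
theorem averaged_squared_block_statistics_L2_convergence
    (P : Measure Ω) [IsProbabilityMeasure P]
    (Z : ℕ → Ω → ℝ) (μ σ2 : ℝ) (d K : ℕ → ℕ)
    (hmeas : ∀ i, Measurable (Z i))
    (hmom : ∀ i, Integrable (fun ω => (Z i ω) ^ 4) P)
    (hmean : ∀ i, ∫ ω, Z i ω ∂P = μ)
    (hd : ∀ m, 0 < d m) (hK : ∀ m, 0 < K m)
    -- (i) `K_n → ∞`
    (hKtop : Tendsto (fun m => K m) atTop atTop)
    -- (ii) `sup_{1≤k≤K_n} |d_n · E[(W_{n,k} − μ)²] − σ²| → 0` with `σ² ∈ (0, ∞)`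
    (hσ2 : 0 < σ2)
    (hvar : ∀ ε > (0 : ℝ), ∃ N, ∀ m ≥ N, ∀ k, 1 ≤ k → k ≤ K m →
      |(d m : ℝ) * ∫ ω, (blockMean Z (d m) k ω - μ) ^ 2 ∂P - σ2| ≤ ε)
    -- (iii) uniform fourth-moment bound on the blocks
    (C : ℝ)
    (hC : ∀ m, ∀ k, 1 ≤ k → k ≤ K m →
      (d m : ℝ) ^ 2 * ∫ ω, (blockMean Z (d m) k ω - μ) ^ 4 ∂P ≤ C)
    -- (iv) pairwise independence of the block random vectors
    (hindep : ∀ m, ∀ k k', 1 ≤ k → k ≤ K m → 1 ≤ k' → k' ≤ K m → k ≠ k' →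
      IndepFun (blockVec Z (d m) k) (blockVec Z (d m) k') P) :
    Tendsto
      (fun m => ∫ ω,
        ((∑ k ∈ Finset.Icc 1 (K m), (tBlock Z (d m) k μ ω) ^ 2) / (K m) - σ2) ^ 2 ∂P)
      atTop (𝓝 0) := by
  rw [Metric.tendsto_atTop]
  intro δ hδ
  set ε : ℝ := Real.sqrt (δ/4) with hεdef
  have hε2 : ε^2 = δ/4 := Real.sq_sqrt (by linarith)
  have hεpos : 0 < ε := Real.sqrt_pos.mpr (by linarith)
  obtain ⟨N₁, hN₁⟩ := hvar ε hεpos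
  -- 0 ≤ C
  have hC0 : 0 ≤ C := by
    refine le_trans ?_ (hC 0 1 le_rfl (hK 0))
    exact mul_nonneg (by positivity) (integral_nonneg fun ω => by positivity)
  -- eventually (C + σ2^2)/(K m) ≤ δ/4
  have hKR : Tendsto (fun m => (K m : ℝ)) atTop atTop :=
    tendsto_natCast_atTop_atTop.comp hKtop
  obtain ⟨N₂, hN₂⟩ := (hKR.eventually_gt_atTop (4*(C+σ2^2)/δ)).exists_forall_of_atTop
  refine ⟨max N₁ N₂, fun m hm => ?_⟩
  have hm1 : N₁ ≤ m := le_trans (le_max_left _ _) hm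
  have hm2 : N₂ ≤ m := le_trans (le_max_right _ _) hm
  have hKm : (0:ℝ) < K m := by exact_mod_cast hK m
  have hdiv : (C + σ2^2)/(K m : ℝ) ≤ δ/4 := by
    rw [div_le_iff₀ hKm]
    have h4 := hN₂ m hm2
    rw [div_lt_iff₀ hδ] at h4
    nlinarith
  have hbound := main_bound P Z μ σ2 (d m) (K m) (hK m) hmeas hmom hσ2 ε hεpos.le C
    (fun k h1 h2 => hN₁ m hm1 k h1 h2) (fun k h1 h2 => hC m k h1 h2)
    (fun k k' h1 h2 h3 h4 h5 => hindep m k k' h1 h2 h3 h4 h5)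
  have hnn : 0 ≤ ∫ ω, ((∑ k ∈ Finset.Icc 1 (K m), (tBlock Z (d m) k μ ω) ^ 2) / (K m : ℝ)
      - σ2) ^ 2 ∂P := integral_nonneg fun ω => by positivity
  rw [Real.dist_eq, sub_zero, abs_of_nonneg hnn]
  calc ∫ ω, ((∑ k ∈ Finset.Icc 1 (K m), (tBlock Z (d m) k μ ω) ^ 2) / (K m : ℝ) - σ2) ^ 2 ∂P
      ≤ (C + σ2^2)/(K m : ℝ) + ε^2 := hbound
    _ ≤ δ/4 + δ/4 := by rw [hε2]; linarith
    _ < δ := by linarith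
end
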